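/- Assume the sequential mean-independence conditions: for every j = 1,...,k, P[Z_j·B_j | 𝓖_j] = q_j·P[Z_j | 𝓖_j] almost surely. Then P[ζ·∏_{j=1}^{k} (1−B_j)/(1−q_j) | 𝓖_1] = P[ζ | 𝓖_1] almost surely. (This is the sequential inverse-probability-weighting identity underlying the identification of the causal excursion effect over a window of Δ > 1 decision points.) -/

import Mathlib

open MeasureTheory

/-- Auxiliary definition: `ipwF P 𝓖 B ζ k j ω = ζ ω * ∏_{l=j+1}^{k} (1-B_l ω)/(1-q_l ω)`. -/
noncomputable def ipwF {Ω : Type*} {mΩ : MeasurableSpace Ω} (P : Measure Ω)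
    (𝓖 : ℕ → MeasurableSpace Ω) (B : ℕ → Ω → ℝ) (ζ : Ω → ℝ) (k j : ℕ) : Ω → ℝ :=
  fun ω => ζ ω * ∏ l ∈ Finset.Icc (j + 1) k, (1 - B l ω) / (1 - (P[B l | 𝓖 l]) ω)

/-- Sequential inverse-probability-weighting identity. With `q_j = P[B_j|𝓖_j]`
and `Z_j = ζ·∏_{l=j+1}^{k} (1−B_l)/(1−q_l)`, if `P[Z_j·B_j | 𝓖_j] = q_j·P[Z_j | 𝓖_j]` a.s.
for each `j = 1,...,k`, then `P[ζ·∏_{j=1}^{k} (1−B_j)/(1−q_j) | 𝓖_1] = P[ζ | 𝓖_1]` a.s. -/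
theorem sequential_ipw_identity
    {Ω : Type*} {mΩ : MeasurableSpace Ω} {P : Measure Ω} [IsProbabilityMeasure P]
    {k : ℕ} {𝓖 : ℕ → MeasurableSpace Ω}
    (h𝓖mono : ∀ i j, 1 ≤ i → i ≤ j → j ≤ k → 𝓖 i ≤ 𝓖 j)
    (h𝓖le : ∀ j, 1 ≤ j → j ≤ k → 𝓖 j ≤ mΩ)
    {B : ℕ → Ω → ℝ} (hB : ∀ j, Measurable (B j))
    (hB01 : ∀ j, 1 ≤ j → j ≤ k → ∀ᵐ ω ∂P, B j ω = 0 ∨ B j ω = 1)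
    {ε : ℝ} (hε : 0 < ε)
    (hq : ∀ j, 1 ≤ j → j ≤ k → ∀ᵐ ω ∂P, (P[B j | 𝓖 j]) ω ≤ 1 - ε)
    {ζ : Ω → ℝ} (hζmeas : Measurable ζ) {Cζ : ℝ} (hζb : ∀ᵐ ω ∂P, |ζ ω| ≤ Cζ)
    (hMI : ∀ j, 1 ≤ j → j ≤ k →
      P[(fun ω => (ζ ω * ∏ l ∈ Finset.Icc (j + 1) k,
            (1 - B l ω) / (1 - (P[B l | 𝓖 l]) ω)) * B j ω) | 𝓖 j]
        =ᵐ[P] fun ω => (P[B j | 𝓖 j]) ω *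
          (P[(fun ω => ζ ω * ∏ l ∈ Finset.Icc (j + 1) k,
            (1 - B l ω) / (1 - (P[B l | 𝓖 l]) ω)) | 𝓖 j]) ω) :
    P[(fun ω => ζ ω * ∏ j ∈ Finset.Icc 1 k,
        (1 - B j ω) / (1 - (P[B j | 𝓖 j]) ω)) | 𝓖 1]
      =ᵐ[P] P[ζ | 𝓖 1] := by
  -- notation
  set F : ℕ → Ω → ℝ := ipwF P 𝓖 B ζ k with hF_def
  have hFapp : ∀ j ω, F j ω = ζ ω * ∏ l ∈ Finset.Icc (j + 1) k,
      (1 - B l ω) / (1 - (P[B l | 𝓖 l]) ω) := fun j ω => rfl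
  haveI : (ae P).NeBot := ae_neBot.2 (IsProbabilityMeasure.ne_zero P)
  have hCζ : 0 ≤ Cζ := by
    obtain ⟨ω, hω⟩ := hζb.exists
    exact (abs_nonneg _).trans hω
  -- a.e. good set
  have hgood : ∀ᵐ ω ∂P, ∀ l, 1 ≤ l → l ≤ k →
      (B l ω = 0 ∨ B l ω = 1) ∧ (P[B l | 𝓖 l]) ω ≤ 1 - ε := by
    rw [MeasureTheory.ae_all_iff]
    intro l
    by_cases h : 1 ≤ l ∧ l ≤ k
    · filter_upwards [hB01 l h.1 h.2, hq l h.1 h.2] with ω h1 h2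
      exact fun _ _ => ⟨h1, h2⟩
    · filter_upwards with ω h1 h2
      exact absurd ⟨h1, h2⟩ h
  -- factor bound
  have hfac : ∀ ω, (∀ l, 1 ≤ l → l ≤ k →
        (B l ω = 0 ∨ B l ω = 1) ∧ (P[B l | 𝓖 l]) ω ≤ 1 - ε) →
      ∀ l, 1 ≤ l → l ≤ k → |(1 - B l ω) / (1 - (P[B l | 𝓖 l]) ω)| ≤ ε⁻¹ := by
    intro ω hω l h1 h2
    obtain ⟨hb, hqb⟩ := hω l h1 h2
    have hεq : ε ≤ 1 - (P[B l | 𝓖 l]) ω := by linarith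
    have hpos : 0 < 1 - (P[B l | 𝓖 l]) ω := lt_of_lt_of_le hε hεq
    have hnum : |1 - B l ω| ≤ 1 := by rcases hb with h | h <;> simp [h]
    rw [abs_div, abs_of_pos hpos]
    calc |1 - B l ω| / (1 - (P[B l | 𝓖 l]) ω) ≤ 1 / ε :=
          div_le_div₀ zero_le_one hnum hε hεq
      _ = ε⁻¹ := one_div ε
  -- measurability of q's
  have hqm : ∀ l, 1 ≤ l → l ≤ k → Measurable (P[B l | 𝓖 l]) := fun l h1 h2 =>
    (stronglyMeasurable_condExp.mono (h𝓖le l h1 h2)).measurable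
  -- measurability of F j
  have hFmeas : ∀ j, Measurable (F j) := by
    intro j
    apply hζmeas.mul
    apply Finset.measurable_prod
    intro l hl
    obtain ⟨hl1, hl2⟩ := Finset.mem_Icc.1 hl
    exact (measurable_const.sub (hB l)).div
      (measurable_const.sub (hqm l (le_trans (Nat.le_add_left 1 j) hl1) hl2))
  -- a.e. bound on F j
  have hFbound : ∀ j, ∀ᵐ ω ∂P, |F j ω| ≤ Cζ * ε⁻¹ ^ (Finset.Icc (j + 1) k).card := by
    intro j
    filter_upwards [hgood, hζb] with ω hg hζ
    rw [hFapp, abs_mul]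
    refine mul_le_mul hζ ?_ (abs_nonneg _) hCζ
    rw [Finset.abs_prod]
    calc (∏ l ∈ Finset.Icc (j + 1) k, |(1 - B l ω) / (1 - (P[B l | 𝓖 l]) ω)|)
        ≤ ∏ _l ∈ Finset.Icc (j + 1) k, ε⁻¹ := by
          refine Finset.prod_le_prod (fun l _ => abs_nonneg _) ?_
          intro l hl
          obtain ⟨hl1, hl2⟩ := Finset.mem_Icc.1 hl
          exact hfac ω hg l (le_trans (Nat.le_add_left 1 j) hl1) hl2
      _ = ε⁻¹ ^ (Finset.Icc (j + 1) k).card := Finset.prod_const _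
  -- integrability of F j
  have hFint : ∀ j, Integrable (F j) P := by
    intro j
    refine Integrable.mono' (integrable_const (Cζ * ε⁻¹ ^ (Finset.Icc (j + 1) k).card))
      (hFmeas j).aestronglyMeasurable ?_
    filter_upwards [hFbound j] with ω hω
    simpa using hω
  -- integrability of F m * B m
  have hFBint : ∀ m, 1 ≤ m → m ≤ k → Integrable (fun ω => F m ω * B m ω) P := by
    intro m h1 h2
    refine Integrable.mono' (integrable_const (Cζ * ε⁻¹ ^ (Finset.Icc (m + 1) k).card * 1))
      ((hFmeas m).mul (hB m)).aestronglyMeasurable ?_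
    filter_upwards [hFbound m, hB01 m h1 h2] with ω h h01
    have hBb : |B m ω| ≤ 1 := by rcases h01 with hb | hb <;> simp [hb]
    calc ‖F m ω * B m ω‖ = |F m ω| * |B m ω| := abs_mul _ _
      _ ≤ Cζ * ε⁻¹ ^ (Finset.Icc (m + 1) k).card * 1 :=
          mul_le_mul h hBb (abs_nonneg _)
            (mul_nonneg hCζ (pow_nonneg (inv_nonneg.2 hε.le) _))
  -- key one-step identity
  have hstep : ∀ j, j + 1 ≤ k → P[F j | 𝓖 (j + 1)] =ᵐ[P] P[F (j + 1) | 𝓖 (j + 1)] := by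
    intro j hjk
    set m := j + 1 with hm_def
    have hm1 : 1 ≤ m := Nat.le_add_left 1 j
    -- pointwise splitting of F j
    have hsplit : F j = (fun ω => (1 - (P[B m | 𝓖 m]) ω)⁻¹) *
        fun ω => F m ω * (1 - B m ω) := by
      funext ω
      show F j ω = (1 - (P[B m | 𝓖 m]) ω)⁻¹ * (F m ω * (1 - B m ω))
      rw [hFapp, hFapp, ← Finset.insert_Icc_add_one_left_eq_Icc hjk,
        Finset.prod_insert (by simp)]
      ring
    have hint_g : Integrable (fun ω => F m ω * (1 - B m ω)) P := by
      have : (fun ω => F m ω * (1 - B m ω)) = fun ω => F m ω - F m ω * B m ω := by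
        funext ω; ring
      rw [this]
      exact (hFint m).sub (hFBint m hm1 hjk)
    have hsm : StronglyMeasurable[𝓖 m] (fun ω => (1 - (P[B m | 𝓖 m]) ω)⁻¹) := by
      have hc : Measurable[𝓖 m] (P[B m | 𝓖 m]) := stronglyMeasurable_condExp.measurable
      exact ((measurable_const.sub hc).inv).stronglyMeasurable
    have hint_fg : Integrable ((fun ω => (1 - (P[B m | 𝓖 m]) ω)⁻¹) *
        fun ω => F m ω * (1 - B m ω)) P := by
      rw [← hsplit]; exact hFint j
    have hpull := condExp_mul_of_stronglyMeasurable_left (μ := P) (m := 𝓖 m) hsm hint_fg hint_g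
    -- conditional expectation of F m * (1 - B m)
    have hsub : P[(fun ω => F m ω * (1 - B m ω)) | 𝓖 m]
        =ᵐ[P] fun ω => (1 - (P[B m | 𝓖 m]) ω) * (P[F m | 𝓖 m]) ω := by
      have h1 : (fun ω => F m ω * (1 - B m ω))
          = (F m) - fun ω => F m ω * B m ω := by funext ω; simp; ring
      rw [h1]
      calc P[(F m - fun ω => F m ω * B m ω) | 𝓖 m]
          =ᵐ[P] P[F m | 𝓖 m] - P[(fun ω => F m ω * B m ω) | 𝓖 m] :=
            condExp_sub (hFint m) (hFBint m hm1 hjk) _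
        _ =ᵐ[P] fun ω => (1 - (P[B m | 𝓖 m]) ω) * (P[F m | 𝓖 m]) ω := by
            have := hMI m hm1 hjk
            filter_upwards [this] with ω hω
            show (P[F m | 𝓖 m]) ω - (P[(fun ω => F m ω * B m ω)|𝓖 m]) ω = _
            rw [show (fun ω => F m ω * B m ω) = (fun ω => (ζ ω * ∏ l ∈ Finset.Icc (m + 1) k,
              (1 - B l ω) / (1 - (P[B l | 𝓖 l]) ω)) * B m ω) from rfl, hω]
            show (P[F m|𝓖 m]) ω - (P[B m|𝓖 m]) ω * (P[F m|𝓖 m]) ω = _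
            ring
    calc P[F j | 𝓖 m] = P[(fun ω => (1 - (P[B m | 𝓖 m]) ω)⁻¹) *
          fun ω => F m ω * (1 - B m ω) | 𝓖 m] := by rw [hsplit]
      _ =ᵐ[P] (fun ω => (1 - (P[B m | 𝓖 m]) ω)⁻¹) *
          P[(fun ω => F m ω * (1 - B m ω)) | 𝓖 m] := hpull
      _ =ᵐ[P] P[F m | 𝓖 m] := by
          filter_upwards [hq m hm1 hjk, hsub] with ω hqω hsω
          show (1 - (P[B m | 𝓖 m]) ω)⁻¹ * (P[(fun ω => F m ω * (1 - B m ω)) | 𝓖 m]) ω = _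
          rw [hsω]
          have hne : 1 - (P[B m | 𝓖 m]) ω ≠ 0 := by
            have : ε ≤ 1 - (P[B m | 𝓖 m]) ω := by linarith
            linarith [lt_of_lt_of_le hε this]
          field_simp
  -- descending induction
  have main : ∀ n j, j + n = k → P[F j | 𝓖 1] =ᵐ[P] P[ζ | 𝓖 1] := by
    intro n
    induction n with
    | zero =>
      intro j hj
      rw [Nat.add_zero] at hj
      subst hj
      refine condExp_congr_ae (Filter.Eventually.of_forall fun ω => ?_)
      rw [hFapp, Finset.Icc_eq_empty_of_lt (Nat.lt_succ_self j), Finset.prod_empty, mul_one]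
    | succ n ih =>
      intro j hj
      have hjk : j + 1 ≤ k := by omega
      have hIH : P[F (j + 1) | 𝓖 1] =ᵐ[P] P[ζ | 𝓖 1] := ih (j + 1) (by omega)
      have htow : ∀ f : Ω → ℝ, P[P[f | 𝓖 (j + 1)] | 𝓖 1] =ᵐ[P] P[f | 𝓖 1] := fun f =>
        condExp_condExp_of_le (h𝓖mono 1 (j + 1) le_rfl (Nat.le_add_left 1 j) hjk)
          (h𝓖le (j + 1) (Nat.le_add_left 1 j) hjk)
      calc P[F j | 𝓖 1] =ᵐ[P] P[P[F j | 𝓖 (j + 1)] | 𝓖 1] := (htow (F j)).symm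
        _ =ᵐ[P] P[P[F (j + 1) | 𝓖 (j + 1)] | 𝓖 1] := condExp_congr_ae (hstep j hjk)
        _ =ᵐ[P] P[F (j + 1) | 𝓖 1] := htow (F (j + 1))
        _ =ᵐ[P] P[ζ | 𝓖 1] := hIH
  exact main k 0 (Nat.zero_add k)
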